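/- Let $a$ be an element of a ring $K$ satisfying $z_0 a^m + z_1 a^{m-1} + \cdots + z_{m-1} a = 0$ for some positive integer $m$ and integers $z_0 > 0, z_1, \dots, z_{m-1}$ with $\gcd(z_0, z_1, \dots, z_{m-1}) = k$, and also $d \cdot f(a) = 0$ for some monic integer polynomial $f(x)$ without constant term and some integer $d > 1$. Then $k \cdot \varphi(a) = 0$ in $K$ for some monic integer polynomial $\varphi(x)$ of degree at most $m$ without constant term. -/

import Mathlib

/-- A (not necessarily unital) ring `K` is finitely separable if every element `a`
lying outside a subring `A` can be separated from `A` by a homomorphism to a finite ring. -/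
def IsFinSep (K : Type) [NonUnitalRing K] : Prop :=
  ∀ (a : K) (A : NonUnitalSubring K), a ∉ A →
    ∃ (F : Type) (_ : NonUnitalRing F) (_ : Finite F),
      ∃ φ : K →ₙ+* F, φ a ∉ ⇑φ '' (A : Set K)

/-- `ppow a n = a ^ (n + 1)`, the positive powers of `a` in a non-unital ring. -/
def ppow {K : Type} [NonUnitalRing K] (a : K) : ℕ → K
  | 0 => a
  | n + 1 => ppow a n * a

/-- Evaluation of an integer polynomial (whose constant term is ignored, hence
meaningful for polynomials with zero constant term) at an element of a non-unital ring. -/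
def evalnc {K : Type} [NonUnitalRing K] (p : Polynomial ℤ) (a : K) : K :=
  ∑ i ∈ Finset.range p.natDegree, p.coeff (i + 1) • ppow a i



section Stmt18Aux
open Polynomial

lemma aux_exists_pow_mul_not_dvd (p : ℤ) (hp : Prime p) :
    ∀ (c : ℕ) (d : ℤ), d ≠ 0 → d.natAbs ≤ c → ∃ (s : ℕ) (u : ℤ), ¬ p ∣ u ∧ d = p ^ s * u := by
  intro c
  induction c with
  | zero =>
    intro d hd h
    exact absurd (Int.natAbs_eq_zero.mp (Nat.le_zero.mp h)) hd
  | succ c ih =>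
    intro d hd h
    by_cases hpd : p ∣ d
    · obtain ⟨d', rfl⟩ := hpd
      have hd' : d' ≠ 0 := by rintro rfl; simp at hd
      have hp2 : 2 ≤ p.natAbs := by
        have := Int.prime_iff_natAbs_prime.mp hp
        exact this.two_le
      have hle : d'.natAbs ≤ c := by
        have : (p * d').natAbs = p.natAbs * d'.natAbs := Int.natAbs_mul p d'
        have h1 : 1 ≤ d'.natAbs := Nat.one_le_iff_ne_zero.mpr (Int.natAbs_ne_zero.mpr hd')
        nlinarith [h, this]
      obtain ⟨s, u, hu, hdu⟩ := ih d' hd' hle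
      exact ⟨s + 1, u, hu, by rw [hdu]; ring⟩
    · exact ⟨0, d, hpd, by ring⟩

/-- If an ideal of `ℤ[X]` contains, for every prime, an element of degree ≤ D whose
`D`-th coefficient is not divisible by that prime, it contains a monic of degree `D`. -/
lemma aux_exists_monic_of_ideal (I : Ideal (Polynomial ℤ)) (D : ℕ)
    (h2 : ∀ p : ℤ, Prime p → ∃ χ ∈ I, χ.natDegree ≤ D ∧ ¬ p ∣ χ.coeff D) :
    ∃ ψ ∈ I, ψ.Monic ∧ ψ.natDegree = D := by
  classical
  set J : Ideal ℤ :=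
    { carrier := {c : ℤ | ∃ χ ∈ I, χ.natDegree ≤ D ∧ χ.coeff D = c}
      add_mem' := by
        rintro x y ⟨χ₁, h₁, hd₁, rfl⟩ ⟨χ₂, h₂, hd₂, rfl⟩
        exact ⟨χ₁ + χ₂, I.add_mem h₁ h₂,
          le_trans (Polynomial.natDegree_add_le _ _) (by omega),
          by simp [Polynomial.coeff_add]⟩
      zero_mem' := ⟨0, I.zero_mem, by simp, by simp⟩
      smul_mem' := by
        rintro c x ⟨χ, h, hd, rfl⟩
        exact ⟨c • χ, I.toAddSubgroup.zsmul_mem h c,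
          le_trans (Polynomial.natDegree_smul_le _ _) hd, by simp [Polynomial.coeff_smul]⟩ } with hJ
  have hmem : ∀ c : ℤ, c ∈ J ↔ ∃ χ ∈ I, χ.natDegree ≤ D ∧ χ.coeff D = c := fun c => Iff.rfl
  obtain ⟨g, hg⟩ : ∃ g : ℤ, J = Ideal.span {g} :=
    ⟨_, (Submodule.IsPrincipal.span_singleton_generator J).symm⟩
  have hgu : IsUnit g := by
    by_contra hgu
    have : g.natAbs ≠ 1 := fun h => hgu (Int.isUnit_iff_natAbs_eq.mpr h)
    obtain ⟨p, hp, hpg⟩ := Int.exists_prime_and_dvd this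
    obtain ⟨χ, hχI, hχd, hχc⟩ := h2 p hp
    have : χ.coeff D ∈ J := ⟨χ, hχI, hχd, rfl⟩
    rw [hg, Ideal.mem_span_singleton] at this
    exact hχc (dvd_trans hpg this)
  have h1 : (1 : ℤ) ∈ J := by
    rw [hg]
    exact (Ideal.span_singleton_eq_top.mpr hgu).symm ▸ Submodule.mem_top
  obtain ⟨ψ, hψI, hψd, hψc⟩ := (hmem 1).mp h1
  exact ⟨ψ, hψI, Polynomial.monic_of_natDegree_le_of_coeff_eq_one D hψd hψc,
    le_antisymm hψd (Polynomial.le_natDegree_of_ne_zero (by rw [hψc]; exact one_ne_zero))⟩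


lemma aux_mul_X_pow_eq_sum (g : Polynomial ℤ) (kk b : ℕ) (hb : g.natDegree < b) :
    (X : Polynomial ℤ) ^ kk * g = ∑ j ∈ Finset.range b, g.coeff j • (X : Polynomial ℤ) ^ (kk + j) := by
  conv_lhs => rw [g.as_sum_range' b hb]
  rw [Finset.mul_sum]
  refine Finset.sum_congr rfl fun j _ => ?_
  rw [← Polynomial.C_mul_X_pow_eq_monomial, Polynomial.smul_eq_C_mul, pow_add]
  ring

section LocalCase

variable (R f : Polynomial ℤ) (d : ℤ) (m : ℕ)

/-- The local case: for a prime dividing `d`, the ideal `(R, d·f)` contains an element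
of degree ≤ N = max m n whose top coefficient is prime to `p`. -/
lemma aux_local (hm : 1 ≤ m) (hd0 : d ≠ 0) (hf : f.Monic)
    (hRdeg : R.natDegree ≤ m) (hR0 : R.coeff 0 = 0)
    (p : ℤ) (hp : Prime p) (hpR : ∃ j, ¬ p ∣ R.coeff j) (hpd : p ∣ d) :
    ∃ χ ∈ Ideal.span ({R, Polynomial.C d * f} : Set (Polynomial ℤ)),
      χ.natDegree ≤ max m f.natDegree ∧ ¬ p ∣ χ.coeff (max m f.natDegree) := by
  classical
  set n := f.natDegree with hn
  set N := max m n with hN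
  set G : Polynomial ℤ := Polynomial.C d * f with hG
  set I : Ideal (Polynomial ℤ) := Ideal.span {R, G} with hI
  have hRI : R ∈ I := Ideal.subset_span (by simp)
  have hGI : G ∈ I := Ideal.subset_span (by simp)
  -- the submodule U
  set U : Submodule ℤ (Polynomial ℤ) :=
    Polynomial.degreeLT ℤ N ⊔ Submodule.restrictScalars ℤ I with hU
  have hUlow : ∀ (c : ℤ) (w : ℕ), w < N → c • (X : Polynomial ℤ) ^ w ∈ U := by
    intro c w hw
    refine Submodule.mem_sup_left (Submodule.smul_mem _ _ ?_)
    rw [Polynomial.mem_degreeLT]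
    exact lt_of_le_of_lt (Polynomial.degree_X_pow_le w) (by exact_mod_cast hw)
  have hUI : ∀ χ : Polynomial ℤ, χ ∈ I → χ ∈ U :=
    fun χ h => Submodule.mem_sup_right ((Submodule.restrictScalars_mem ℤ I χ).mpr h)
  -- Claim A : d • X^w ∈ U
  have claimA : ∀ w : ℕ, d • (X : Polynomial ℤ) ^ w ∈ U := by
    intro w
    induction w using Nat.strong_induction_on with
    | _ w ih =>
      rcases lt_or_ge w N with hw | hw
      · exact hUlow d w hw
      · have hwn : n ≤ w := le_trans (le_max_right m n) hw
        have hGdeg : G.natDegree = n := by rw [hG, Polynomial.natDegree_C_mul hd0]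
        have hid := aux_mul_X_pow_eq_sum G (w - n) (n + 1) (by omega)
        rw [Finset.sum_range_succ] at hid
        have hcoefftop : G.coeff n = d := by
          rw [hG, Polynomial.coeff_C_mul, hn, Polynomial.Monic.coeff_natDegree hf, mul_one]
        rw [hcoefftop] at hid
        have hww : w - n + n = w := by omega
        rw [hww] at hid
        have key : d • (X : Polynomial ℤ) ^ w
            = (X : Polynomial ℤ) ^ (w - n) * G
              - ∑ j ∈ Finset.range n, G.coeff j • (X : Polynomial ℤ) ^ (w - n + j) := by
          rw [hid]; ring
        rw [key]
        refine Submodule.sub_mem _ (hUI _ (Ideal.mul_mem_left _ _ hGI)) (Submodule.sum_mem _ ?_)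
        intro j hj
        have hGc : G.coeff j = d * f.coeff j := by rw [hG, Polynomial.coeff_C_mul]
        rw [hGc, mul_comm d (f.coeff j), ← smul_smul]
        exact Submodule.smul_mem _ _ (ih (w - n + j) (by simp at hj; omega))
  -- find the pivot q
  set S : Finset ℕ := (Finset.range (m + 1)).filter (fun j => ¬ p ∣ R.coeff j) with hS
  have hSne : S.Nonempty := by
    obtain ⟨j, hj⟩ := hpR
    have hjm : j ≤ m := by
      by_contra hc
      exact hj (by rw [Polynomial.coeff_eq_zero_of_natDegree_lt (by omega)]; exact dvd_zero p)
    exact ⟨j, by simp [hS, Finset.mem_filter, Finset.mem_range]; exact ⟨by omega, hj⟩⟩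
  set q : ℕ := S.max' hSne with hq
  have hqS : q ∈ S := S.max'_mem hSne
  have hqm : q ≤ m := by
    have := (Finset.mem_filter.mp hqS).1
    simp [Finset.mem_range] at this; omega
  have hpy : ¬ p ∣ R.coeff q := (Finset.mem_filter.mp hqS).2
  have hq1 : 1 ≤ q := by
    rcases Nat.eq_zero_or_pos q with h0 | h; swap; · exact h
    exfalso; apply hpy; rw [h0, hR0]; exact dvd_zero p
  set y : ℤ := R.coeff q with hy
  have hhigh : ∀ j, q < j → p ∣ R.coeff j := by
    intro j hqj
    rcases le_or_gt j m with hjm | hjm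
    · by_contra hc
      have : j ∈ S := Finset.mem_filter.mpr ⟨Finset.mem_range.mpr (by omega), hc⟩
      exact absurd (S.le_max' j this) (by omega)
    · rw [Polynomial.coeff_eq_zero_of_natDegree_lt (by omega)]; exact dvd_zero p
  -- decomposition of d
  obtain ⟨s, u, hpu, hdsu⟩ := aux_exists_pow_mul_not_dvd p hp d.natAbs d hd0 le_rfl
  -- the y-saturation of U
  set QU : Submodule ℤ (Polynomial ℤ) :=
    { carrier := {v | ∃ e : ℕ, y ^ e • v ∈ U}
      add_mem' := by
        rintro v₁ v₂ ⟨e₁, h₁⟩ ⟨e₂, h₂⟩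
        refine ⟨e₁ + e₂, ?_⟩
        rw [smul_add]
        refine Submodule.add_mem _ ?_ ?_
        · rw [pow_add, mul_comm, mul_smul]; exact Submodule.smul_mem _ _ h₁
        · rw [pow_add, mul_smul]; exact Submodule.smul_mem _ _ h₂
      zero_mem' := ⟨0, by simpa using Submodule.zero_mem U⟩
      smul_mem' := by
        rintro c v ⟨e, h⟩
        exact ⟨e, by rw [smul_comm]; exact Submodule.smul_mem _ _ h⟩ } with hQU
  have hUQU : ∀ v, v ∈ U → v ∈ QU := fun v h => ⟨0, by simpa using h⟩
  have hQUabs : ∀ v, y • v ∈ QU → v ∈ QU := by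
    rintro v ⟨e, h⟩
    exact ⟨e + 1, by rw [pow_succ, mul_smul]; exact h⟩
  -- main claim B
  have claimB : ∀ t : ℕ, t ≤ s → ∀ w : ℕ, (p ^ (s - t) * u) • (X : Polynomial ℤ) ^ w ∈ QU := by
    intro t
    induction t with
    | zero =>
      intro _ w
      have : p ^ (s - 0) * u = d := by rw [Nat.sub_zero, hdsu]
      rw [this]
      exact hUQU _ (claimA w)
    | succ t iht =>
      intro hts w
      induction w using Nat.strong_induction_on with
      | _ w ihw =>
        rcases lt_or_ge w N with hw | hw
        · exact hUQU _ (hUlow _ w hw)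
        · have hwq : q ≤ w := le_trans (le_trans hqm (le_max_left m n)) hw
          -- key identity
          have hid := aux_mul_X_pow_eq_sum R (w - q) (m + 1) (by omega)
          rw [← Finset.add_sum_erase _ _ (Finset.mem_range.mpr (by omega : q < m + 1))] at hid
          have hww : w - q + q = w := by omega
          rw [hww] at hid
          -- hid : X^(w-q) * R = y • X^w + ∑_{j ∈ erase q} R.coeff j • X^(w-q+j)
          have key : y • (X : Polynomial ℤ) ^ w
              = (X : Polynomial ℤ) ^ (w - q) * R
                - ∑ j ∈ (Finset.range (m + 1)).erase q,
                    R.coeff j • (X : Polynomial ℤ) ^ (w - q + j) := by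
            rw [hid, hy]; ring
          refine hQUabs _ ?_
          have hsw : y • ((p ^ (s - (t + 1)) * u) • (X : Polynomial ℤ) ^ w)
              = (p ^ (s - (t + 1)) * u) • (y • (X : Polynomial ℤ) ^ w) := smul_comm _ _ _
          rw [hsw, key, smul_sub, Finset.smul_sum]
          refine Submodule.sub_mem _
            (hUQU _ (Submodule.smul_mem _ _ (hUI _ (Ideal.mul_mem_left _ _ hRI))))
            (Submodule.sum_mem _ ?_)
          intro j hj
          obtain ⟨hjq, hjm1⟩ := Finset.mem_erase.mp hj
          have hjm : j ≤ m := by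
            have := Finset.mem_range.mp hjm1; omega
          rcases lt_or_gt_of_ne hjq with hjlt | hjgt
          · -- j < q : strong induction on w at level t+1
            rw [smul_smul, mul_comm, ← smul_smul]
            exact Submodule.smul_mem _ _ (ihw (w - q + j) (by omega))
          · -- j > q : coefficient divisible by p, drop to level t
            obtain ⟨v, hv⟩ := hhigh j hjgt
            rw [hv, smul_smul]
            have harith : p ^ (s - (t + 1)) * u * (p * v) = v * (p ^ (s - t) * u) := by
              have hst : s - (t + 1) + 1 = s - t := by omega
              rw [← hst, pow_succ]; ring
            rw [harith, ← smul_smul]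
            exact Submodule.smul_mem _ _ (iht (by omega) (w - q + j))
  -- extraction
  obtain ⟨e, he⟩ := claimB s le_rfl N
  rw [Nat.sub_self, pow_zero, one_mul] at he
  rw [smul_smul] at he
  obtain ⟨v, hv, ι, hι, hvι⟩ := Submodule.mem_sup.mp he
  set c : ℤ := y ^ e * u with hc
  refine ⟨c • (X : Polynomial ℤ) ^ N - v, ?_, ?_, ?_⟩
  · have : c • (X : Polynomial ℤ) ^ N - v = ι := by rw [← hvι]; ring
    rw [this]
    exact (Submodule.restrictScalars_mem ℤ I ι).mp hι
  · refine le_trans (Polynomial.natDegree_sub_le _ _) ?_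
    simp only [sup_le_iff]
    constructor
    · exact le_trans (Polynomial.natDegree_smul_le _ _) (by simp [Polynomial.natDegree_X_pow])
    · rw [Polynomial.natDegree_le_iff_degree_le]
      exact le_of_lt (Polynomial.mem_degreeLT.mp hv)
  · rw [Polynomial.coeff_sub, Polynomial.coeff_smul, Polynomial.coeff_X_pow, if_pos rfl,
      Polynomial.coeff_eq_zero_of_degree_lt (Polynomial.mem_degreeLT.mp hv)]
    simp only [smul_eq_mul, mul_one, sub_zero]
    intro hdvd
    rcases hp.dvd_mul.mp hdvd with h1 | h2
    · exact hpy (hp.dvd_of_dvd_pow h1)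
    · exact hpu h2

end LocalCase


lemma aux_descent (R : Polynomial ℤ) (m M : ℕ) (I : Ideal (Polynomial ℤ))
    (hm : 1 ≤ m) (hRI : R ∈ I) (hRdeg : R.natDegree ≤ m)
    (hprim : ∀ p : ℤ, Prime p → ∃ j, ¬ p ∣ R.coeff j)
    (hM : m + 1 ≤ M) (ψ : Polynomial ℤ) (hψI : ψ ∈ I) (hψm : ψ.Monic)
    (hψd : ψ.natDegree = M) :
    ∃ φ ∈ I, φ.Monic ∧ φ.natDegree = M - 1 := by
  classical
  refine aux_exists_monic_of_ideal I (M - 1) ?_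
  intro p hp
  set pn : ℕ := p.natAbs with hpn
  have hpnp : pn.Prime := Int.prime_iff_natAbs_prime.mp hp
  haveI : Fact pn.Prime := ⟨hpnp⟩
  have hdvd_iff : ∀ c : ℤ, ¬ p ∣ c ↔ ((c : ZMod pn) ≠ 0) := by
    intro c
    rw [Ne, ZMod.intCast_zmod_eq_zero_iff_dvd, Int.natAbs_dvd]
  set πm : ℤ →+* ZMod pn := Int.castRingHom (ZMod pn) with hπm
  have hRbar : R.map πm ≠ 0 := by
    obtain ⟨j, hj⟩ := hprim p hp
    intro hc
    apply (hdvd_iff _).mp hj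
    have := congrArg (fun g => Polynomial.coeff g j) hc
    simpa [hπm, Polynomial.coeff_map] using this
  set δ : ℕ := (R.map πm).natDegree with hδ
  have hδm : δ ≤ m := le_trans Polynomial.natDegree_map_le hRdeg
  set A : ℕ := M - 1 - δ with hA
  set χ : Polynomial ℤ := ((X : Polynomial ℤ) ^ A * R) %ₘ ψ with hχ
  have hψ1 : ψ ≠ 1 := by
    intro h
    rw [h, Polynomial.natDegree_one] at hψd; omega
  refine ⟨χ, ?_, ?_, ?_⟩
  · rw [hχ, Polynomial.modByMonic_eq_sub_mul_div _ ψ]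
    exact Submodule.sub_mem _ (Ideal.mul_mem_left _ _ hRI) (Ideal.mul_mem_right _ _ hψI)
  · have h1 := Polynomial.natDegree_modByMonic_lt ((X : Polynomial ℤ) ^ A * R) hψm hψ1
    rw [hψd] at h1
    rw [hχ]
    omega
  · -- the mod-p computation
    have hmap : χ.map πm = (X : Polynomial (ZMod pn)) ^ A * R.map πm := by
      rw [hχ]
      rw [Polynomial.map_modByMonic πm hψm, Polynomial.map_mul, Polynomial.map_pow,
        Polynomial.map_X]
      refine (Polynomial.modByMonic_eq_self_iff (hψm.map _)).mpr ?_
      have hψdeg : (ψ.map πm).degree = (M : WithBot ℕ) := by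
        rw [Polynomial.degree_eq_natDegree (hψm.map _).ne_zero,
          Polynomial.Monic.natDegree_map hψm, hψd]
      have hXRdeg : ((X : Polynomial (ZMod pn)) ^ A * R.map πm).degree
          = ((A + δ : ℕ) : WithBot ℕ) := by
        rw [Polynomial.degree_mul, Polynomial.degree_X_pow,
          Polynomial.degree_eq_natDegree hRbar, ← hδ, ← Nat.cast_add]
      rw [hXRdeg, hψdeg]
      exact_mod_cast (by omega : A + δ < M)
    rw [hdvd_iff]
    have hcoeff : (χ.coeff (M - 1) : ZMod pn) = (χ.map πm).coeff (M - 1) := by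
      simp [hπm, Polynomial.coeff_map]
    rw [hcoeff, hmap]
    have hidx : M - 1 = δ + A := by omega
    rw [hidx, Polynomial.coeff_X_pow_mul]
    exact Polynomial.leadingCoeff_ne_zero.mpr hRbar


/-- The main polynomial claim: the ideal `(R, d·f)` contains a monic polynomial of
degree at most `m`. -/
lemma aux_claim (R f : Polynomial ℤ) (d : ℤ) (m : ℕ) (hm : 1 ≤ m) (hd0 : d ≠ 0)
    (hf : f.Monic) (hRdeg : R.natDegree ≤ m) (hR0 : R.coeff 0 = 0)
    (hprim : ∀ p : ℤ, Prime p → ∃ j, ¬ p ∣ R.coeff j) :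
    ∃ φ ∈ Ideal.span ({R, Polynomial.C d * f} : Set (Polynomial ℤ)),
      φ.Monic ∧ φ.natDegree ≤ m := by
  classical
  set n := f.natDegree with hn
  set N := max m n with hN
  set G : Polynomial ℤ := Polynomial.C d * f with hG
  set I : Ideal (Polynomial ℤ) := Ideal.span {R, G} with hI
  have hRI : R ∈ I := Ideal.subset_span (by simp)
  have hGI : G ∈ I := Ideal.subset_span (by simp)
  -- base: a monic polynomial of degree N
  have hbase : ∃ ψ ∈ I, ψ.Monic ∧ ψ.natDegree = N := by
    refine aux_exists_monic_of_ideal I N ?_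
    intro p hp
    by_cases hpd : p ∣ d
    · obtain ⟨j, hj⟩ : ∃ j, ¬ p ∣ R.coeff j := hprim p hp
      exact aux_local R f d m hm hd0 hf hRdeg hR0 p hp ⟨j, hj⟩ hpd
    · refine ⟨(X : Polynomial ℤ) ^ (N - n) * G, Ideal.mul_mem_left _ _ hGI, ?_, ?_⟩
      · refine le_trans (Polynomial.natDegree_mul_le) ?_
        have h1 : ((X : Polynomial ℤ) ^ (N - n)).natDegree ≤ N - n :=
          Polynomial.natDegree_X_pow_le _
        have h2 : G.natDegree = n := by rw [hG, Polynomial.natDegree_C_mul hd0]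
        have : n ≤ N := le_max_right m n
        omega
      · have hcc := Polynomial.coeff_X_pow_mul G (N - n) n
        rw [show n + (N - n) = N from by have : n ≤ N := le_max_right m n; omega] at hcc
        rw [hcc]
        have : G.coeff n = d := by
          rw [hG, Polynomial.coeff_C_mul, hn, hf.coeff_natDegree, mul_one]
        rw [this]; exact hpd
  -- descend to degree ≤ m
  have down : ∀ e : ℕ, (∃ φ ∈ I, φ.Monic ∧ φ.natDegree ≤ m + e) →
      ∃ φ ∈ I, φ.Monic ∧ φ.natDegree ≤ m := by
    intro e
    induction e with
    | zero => intro h; simpa using h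
    | succ e ih =>
      rintro ⟨φ, hφI, hφm, hφd⟩
      rcases le_or_gt φ.natDegree (m + e) with h | h
      · exact ih ⟨φ, hφI, hφm, h⟩
      · have hdeq : φ.natDegree = m + e + 1 := by omega
        obtain ⟨φ', hφ'I, hφ'm, hφ'd⟩ :=
          aux_descent R m (m + e + 1) I hm hRI hRdeg hprim (by omega) φ hφI hφm hdeq
        exact ih ⟨φ', hφ'I, hφ'm, by omega⟩
  obtain ⟨ψ, hψI, hψm, hψd⟩ := hbase
  exact down (N - m) ⟨ψ, hψI, hψm, by have : m ≤ N := le_max_left m n; omega⟩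

section Glue

variable {K : Type} [NonUnitalRing K]

lemma aux_inr_pow (a : K) (i : ℕ) :
    (Unitization.inr a : Unitization ℤ K) ^ (i + 1) = Unitization.inr (ppow a i) := by
  induction i with
  | zero => simp [ppow]
  | succ i ih =>
    rw [pow_succ, ih, ← Unitization.inr_mul]
    rfl

lemma aux_snd_aeval (a : K) (p : Polynomial ℤ) :
    (Polynomial.aeval (Unitization.inr a : Unitization ℤ K) p).snd = evalnc p a := by
  rw [Polynomial.aeval_eq_sum_range]
  have hsum : (∑ i ∈ Finset.range (p.natDegree + 1),
        p.coeff i • (Unitization.inr a : Unitization ℤ K) ^ i).snd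
      = ∑ i ∈ Finset.range (p.natDegree + 1),
        (p.coeff i • (Unitization.inr a : Unitization ℤ K) ^ i).snd :=
    map_sum (Unitization.sndHom ℤ ℤ K) _ _
  rw [hsum, Finset.sum_range_succ']
  have h0 : (p.coeff 0 • (Unitization.inr a : Unitization ℤ K) ^ 0).snd = 0 := by
    rw [pow_zero, Unitization.snd_smul, Unitization.snd_one, smul_zero]
  rw [h0, add_zero]
  refine Finset.sum_congr rfl fun i _ => ?_
  rw [Unitization.snd_smul, aux_inr_pow, Unitization.snd_inr]

lemma aux_fst_aeval (a : K) (p : Polynomial ℤ) :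
    (Polynomial.aeval (Unitization.inr a : Unitization ℤ K) p).fst = p.coeff 0 := by
  have h := Polynomial.aeval_algHom_apply (Unitization.fstHom ℤ K)
    (Unitization.inr a : Unitization ℤ K) p
  have h2 : (Unitization.fstHom ℤ K) (Unitization.inr a : Unitization ℤ K) = 0 := by
    rfl
  rw [h2] at h
  have h3 : (Polynomial.aeval (0 : ℤ)) p = p.coeff 0 := by
    simp [Polynomial.coeff_zero_eq_eval_zero]
  have h4 : (Polynomial.aeval (Unitization.inr a : Unitization ℤ K) p).fst
      = (Unitization.fstHom ℤ K) (Polynomial.aeval (Unitization.inr a : Unitization ℤ K) p) := by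
    rfl
  rw [h4, ← h, h3]

end Glue

/-- extend the `evalnc` sum to any bound dominating the degree -/
lemma aux_evalnc_eq_sum {K : Type} [NonUnitalRing K] (p : Polynomial ℤ) (b : ℕ)
    (hb : p.natDegree ≤ b) (a : K) :
    evalnc p a = ∑ i ∈ Finset.range b, p.coeff (i + 1) • ppow a i := by
  unfold evalnc
  refine Finset.sum_subset (Finset.range_subset_range.mpr hb) ?_
  intro i _ hi
  rw [Polynomial.coeff_eq_zero_of_natDegree_lt (by simp at hi ⊢; omega), zero_smul]

lemma aux_evalnc_C_mul {K : Type} [NonUnitalRing K] (c : ℤ) (hc : c ≠ 0) (g : Polynomial ℤ)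
    (a : K) : evalnc (Polynomial.C c * g) a = c • evalnc g a := by
  unfold evalnc
  rw [Polynomial.natDegree_C_mul hc, Finset.smul_sum]
  refine Finset.sum_congr rfl fun i _ => ?_
  rw [Polynomial.coeff_C_mul, mul_smul]


end Stmt18Aux

/-- If `a` satisfies a relation of degree `m` whose coefficients have gcd `k` and also
`d • f(a) = 0` for a monic polynomial `f` and `d > 1`, then `k • φ(a) = 0` for some
monic polynomial `φ` of degree at most `m`. -/
theorem stmt18 (K : Type) [NonUnitalRing K] (a : K) (m : ℕ) (hm : 0 < m)
    (z : Fin m → ℤ) (hz0 : 0 < z ⟨0, hm⟩) (k : ℤ)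
    (hgcd : Finset.univ.gcd z = k)
    (hrel : ∑ i : Fin m, z i • ppow a (m - 1 - (i : ℕ)) = 0)
    (f : Polynomial ℤ) (d : ℤ) (hd : 1 < d) (hfm : f.Monic) (hfc : f.coeff 0 = 0)
    (hdf : d • evalnc f a = 0) :
    ∃ φ : Polynomial ℤ, φ.Monic ∧ φ.coeff 0 = 0 ∧ φ.natDegree ≤ m ∧
      k • evalnc φ a = 0 := by
  classical
  have hd0 : d ≠ 0 := by omega
  have hk0 : k ≠ 0 := by
    intro h
    rw [h] at hgcd
    have := Finset.gcd_eq_zero_iff.mp hgcd ⟨0, hm⟩ (Finset.mem_univ _)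
    omega
  -- the normalized coefficients
  set y : ℕ → ℤ := fun i => if h : i < m then z ⟨i, h⟩ / k else 0 with hy
  have hzy : ∀ (i : ℕ) (h : i < m), z ⟨i, h⟩ = k * y i := by
    intro i h
    have hdvd : k ∣ z ⟨i, h⟩ := hgcd ▸ Finset.gcd_dvd (Finset.mem_univ _)
    rw [hy]; simp only [dif_pos h]
    exact (Int.mul_ediv_cancel' hdvd).symm
  set R : Polynomial ℤ := ∑ i ∈ Finset.range m, Polynomial.C (y i) * Polynomial.X ^ (m - i) with hR
  have hcoeff : ∀ i : ℕ, i < m → R.coeff (m - i) = y i := by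
    intro i hi
    rw [hR, Polynomial.finset_sum_coeff]
    rw [Finset.sum_eq_single i]
    · rw [Polynomial.coeff_C_mul, Polynomial.coeff_X_pow, if_pos rfl, mul_one]
    · intro j hj hji
      rw [Polynomial.coeff_C_mul, Polynomial.coeff_X_pow, if_neg, mul_zero]
      simp only [Finset.mem_range] at hj
      omega
    · intro h; exact absurd (Finset.mem_range.mpr hi) h
  have hRdeg : R.natDegree ≤ m := by
    rw [hR]
    refine Polynomial.natDegree_sum_le_of_forall_le _ _ fun i hi => ?_
    refine le_trans Polynomial.natDegree_mul_le ?_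
    have h1 : (Polynomial.C (y i)).natDegree = 0 := Polynomial.natDegree_C _
    have h2 : ((Polynomial.X : Polynomial ℤ) ^ (m - i)).natDegree ≤ m - i :=
      Polynomial.natDegree_X_pow_le _
    omega
  have hR0 : R.coeff 0 = 0 := by
    rw [hR, Polynomial.finset_sum_coeff]
    refine Finset.sum_eq_zero fun i hi => ?_
    rw [Polynomial.coeff_C_mul, Polynomial.coeff_X_pow, if_neg, mul_zero]
    simp only [Finset.mem_range] at hi
    omega
  have hprim : ∀ p : ℤ, Prime p → ∃ j, ¬ p ∣ R.coeff j := by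
    intro p hp
    by_contra hc
    push_neg at hc
    have hall : ∀ i : Fin m, k * p ∣ z i := by
      intro i
      have h1 : p ∣ y i := by
        have := hc (m - (i : ℕ))
        rwa [hcoeff (i : ℕ) i.2] at this
      obtain ⟨w, hw⟩ := h1
      refine ⟨w, ?_⟩
      have : z i = k * y (i : ℕ) := by
        have := hzy (i : ℕ) i.2
        simpa [Fin.eta] using this
      rw [this, hw]; ring
    have hdk : k * p ∣ k := by rw [← hgcd]; exact Finset.dvd_gcd fun i _ => by rw [hgcd]; exact hall i
    have : k * p ∣ k * 1 := by simpa using hdk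
    have hp1 : p ∣ 1 := (mul_dvd_mul_iff_left hk0).mp this
    exact hp.not_unit (isUnit_of_dvd_one hp1)
  -- apply the main claim
  obtain ⟨φ, hφI, hφm, hφd⟩ := aux_claim R f d m hm hd0 hfm hRdeg hR0 hprim
  obtain ⟨A, B, hAB⟩ := Ideal.mem_span_pair.mp hφI
  -- pass to the unitization
  set x : Unitization ℤ K := Unitization.inr a with hx
  have hzero : ∀ P : Polynomial ℤ, P.coeff 0 = 0 → evalnc P a = 0 →
      Polynomial.aeval x P = 0 := by
    intro P h1 h2
    have hf1 : (Polynomial.aeval x P).fst = (0 : Unitization ℤ K).fst := by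
      rw [aux_fst_aeval, h1, Unitization.fst_zero]
    have hf2 : (Polynomial.aeval x P).snd = (0 : Unitization ℤ K).snd := by
      rw [aux_snd_aeval, h2, Unitization.snd_zero]
    exact Unitization.ext hf1 hf2
  -- the relation polynomial is killed
  have hRz : Polynomial.aeval x (Polynomial.C k * R) = 0 := by
    refine hzero _ (by rw [Polynomial.coeff_C_mul, hR0, mul_zero]) ?_
    have hdegk : (Polynomial.C k * R).natDegree ≤ m := by
      rw [Polynomial.natDegree_C_mul hk0]; exact hRdeg
    rw [aux_evalnc_eq_sum _ m hdegk]
    -- rewrite hrel as a range sum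
    have hstep1 : ∑ i : Fin m, z i • ppow a (m - 1 - (i : ℕ))
        = ∑ i ∈ Finset.range m, (if h : i < m then z ⟨i, h⟩ • ppow a (m - 1 - i) else 0) := by
      rw [← Fin.sum_univ_eq_sum_range]
      refine Finset.sum_congr rfl fun i _ => ?_
      rw [dif_pos i.2, Fin.eta]
    have hstep2 : ∑ i ∈ Finset.range m,
          (if h : m - 1 - i < m then z ⟨m - 1 - i, h⟩ • ppow a (m - 1 - (m - 1 - i)) else 0)
        = ∑ i ∈ Finset.range m, (if h : i < m then z ⟨i, h⟩ • ppow a (m - 1 - i) else 0) :=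
      Finset.sum_range_reflect (fun i => if h : i < m then z ⟨i, h⟩ • ppow a (m - 1 - i) else 0) m
    have hrel' : ∑ i ∈ Finset.range m,
        (if h : m - 1 - i < m then z ⟨m - 1 - i, h⟩ • ppow a (m - 1 - (m - 1 - i)) else 0) = 0 := by
      rw [hstep2, ← hstep1, hrel]
    rw [← hrel']
    refine Finset.sum_congr rfl fun i hi => ?_
    have him : i < m := Finset.mem_range.mp hi
    have h1 : m - 1 - i < m := by omega
    rw [dif_pos h1]
    have h2 : m - 1 - (m - 1 - i) = i := by omega
    rw [h2]
    congr 1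
    -- (C k * R).coeff (i+1) = z ⟨m-1-i⟩
    rw [Polynomial.coeff_C_mul]
    have h3 : m - (m - 1 - i) = i + 1 := by omega
    have h4 := hcoeff (m - 1 - i) (by omega)
    rw [h3] at h4
    rw [h4, ← hzy (m - 1 - i) h1]
  have hG0 : Polynomial.aeval x (Polynomial.C d * f) = 0 := by
    refine hzero _ (by rw [Polynomial.coeff_C_mul, hfc, mul_zero]) ?_
    rw [aux_evalnc_C_mul d hd0 f a, hdf]
  -- conclude
  have hkey : Polynomial.aeval x (Polynomial.C k * φ) = 0 := by
    have hid : Polynomial.C k * φ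
        = A * (Polynomial.C k * R) + (Polynomial.C k * B) * (Polynomial.C d * f) := by
      rw [← hAB]; ring
    have h1 : Polynomial.aeval x (A * (Polynomial.C k * R)) = 0 := by
      rw [map_mul, hRz, mul_zero]
    have h2 : Polynomial.aeval x ((Polynomial.C k * B) * (Polynomial.C d * f)) = 0 := by
      rw [map_mul, hG0, mul_zero]
    rw [hid, map_add, h1, h2, add_zero]
  have hev : k • evalnc φ a = 0 := by
    rw [← aux_evalnc_C_mul k hk0 φ a, ← aux_snd_aeval a, ← hx, hkey, Unitization.snd_zero]
  have hc0 : φ.coeff 0 = 0 := by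
    have h1 : φ.coeff 0 = A.coeff 0 * R.coeff 0 + B.coeff 0 * ((Polynomial.C d * f).coeff 0) := by
      rw [← hAB, Polynomial.coeff_add, Polynomial.mul_coeff_zero, Polynomial.mul_coeff_zero]
    rw [h1, hR0, Polynomial.coeff_C_mul, hfc, mul_zero, mul_zero, mul_zero, add_zero]
  exact ⟨φ, hφm, hc0, hφd, hev⟩
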